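/- The seven vector fields on C^5 (coordinates x,y,u,p,q): X_1 = ∂_x, H_1 = −2x∂_x + ∂_u + 2p∂_p, Y_1 = −x²∂_x + x∂_u + (1+2xp)∂_p, X_2 = ∂_y, H_2 = −2y∂_y + (1/λ)∂_u + 2q∂_q, Y_2 = −y²∂_y + (1/λ)y∂_u + ((1/λ)+2yq)∂_q, Z = ∂_u (λ ≠ 0) satisfy the bracket relations [X_1,H_1] = −2X_1, [H_1,Y_1] = −2Y_1, [X_1,Y_1] = H_1, [X_2,H_2] = −2X_2, [H_2,Y_2] = −2Y_2, [X_2,Y_2] = H_2, all brackets between the two triples vanish, and Z is central. Hence they span a Lie algebra isomorphic to sl_2(C) × sl_2(C) × C. -/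

import Mathlib

/-- Lie bracket of vector fields on `ℂ^5`, `[V,W] = DW·V − DV·W`. -/
noncomputable def lieVF (V W : (Fin 5 → ℂ) → Fin 5 → ℂ) : (Fin 5 → ℂ) → Fin 5 → ℂ :=
  fun z => fderiv ℂ W z (V z) - fderiv ℂ V z (W z)

-- Coordinates on ℂ^5: (x, y, u, p, q) = (z 0, z 1, z 2, z 3, z 4).
noncomputable def X1 : (Fin 5 → ℂ) → Fin 5 → ℂ := fun _ => ![1, 0, 0, 0, 0]
noncomputable def H1 : (Fin 5 → ℂ) → Fin 5 → ℂ := fun z => ![-2 * z 0, 0, 1, 2 * z 3, 0]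
noncomputable def Y1 : (Fin 5 → ℂ) → Fin 5 → ℂ :=
  fun z => ![-(z 0) ^ 2, 0, z 0, 1 + 2 * z 0 * z 3, 0]
noncomputable def X2 : (Fin 5 → ℂ) → Fin 5 → ℂ := fun _ => ![0, 1, 0, 0, 0]
noncomputable def H2 (lam : ℂ) : (Fin 5 → ℂ) → Fin 5 → ℂ :=
  fun z => ![0, -2 * z 1, 1 / lam, 0, 2 * z 4]
noncomputable def Y2 (lam : ℂ) : (Fin 5 → ℂ) → Fin 5 → ℂ :=
  fun z => ![0, -(z 1) ^ 2, (1 / lam) * z 1, 0, 1 / lam + 2 * z 1 * z 4]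
noncomputable def Zc : (Fin 5 → ℂ) → Fin 5 → ℂ := fun _ => ![0, 0, 1, 0, 0]

/- ### Auxiliary lemmas -/

noncomputable abbrev prj (i : Fin 5) : (Fin 5 → ℂ) →L[ℂ] ℂ := ContinuousLinearMap.proj i

lemma hasFDerivAt_congr' {z : Fin 5 → ℂ} {f : (Fin 5 → ℂ) → ℂ}
    {L L' : (Fin 5 → ℂ) →L[ℂ] ℂ} (h : HasFDerivAt f L z) (hL : ∀ w, L' w = L w) :
    HasFDerivAt f L' z := by
  have : L' = L := ContinuousLinearMap.ext hL
  rwa [this]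

lemma fderiv_X1 (z w : Fin 5 → ℂ) : fderiv ℂ X1 z w = 0 := by
  rw [show X1 = fun _ => ![1, 0, 0, 0, 0] from rfl, fderiv_const_apply]; rfl

lemma fderiv_X2 (z w : Fin 5 → ℂ) : fderiv ℂ X2 z w = 0 := by
  rw [show X2 = fun _ => ![0, 1, 0, 0, 0] from rfl, fderiv_const_apply]; rfl

lemma fderiv_Zc (z w : Fin 5 → ℂ) : fderiv ℂ Zc z w = 0 := by
  rw [show Zc = fun _ => ![0, 0, 1, 0, 0] from rfl, fderiv_const_apply]; rfl

open ContinuousLinearMap in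
lemma fderiv_H1 (z w : Fin 5 → ℂ) :
    fderiv ℂ H1 z w = ![-2 * w 0, 0, 0, 2 * w 3, 0] := by
  have h : HasFDerivAt H1
      (ContinuousLinearMap.pi ![(-2 : ℂ) • prj 0, 0, 0, (2 : ℂ) • prj 3, 0]) z := by
    apply hasFDerivAt_pi''
    intro i
    fin_cases i <;>
      simp only [H1, Matrix.cons_val_zero, Matrix.cons_val_one, Matrix.head_cons,
        Matrix.cons_val_two, Matrix.tail_cons, Matrix.cons_val_three, Matrix.cons_val_four,
        proj_pi, Fin.isValue]
    · exact (hasFDerivAt_apply 0 z).const_mul (-2 : ℂ)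
    · exact hasFDerivAt_const _ _
    · exact hasFDerivAt_const _ _
    · exact (hasFDerivAt_apply 3 z).const_mul (2 : ℂ)
    · exact hasFDerivAt_const _ _
  rw [h.fderiv]
  funext i
  fin_cases i <;> simp

open ContinuousLinearMap in
lemma fderiv_Y1 (z w : Fin 5 → ℂ) :
    fderiv ℂ Y1 z w = ![-2 * z 0 * w 0, 0, w 0, 2 * z 3 * w 0 + 2 * z 0 * w 3, 0] := by
  have h : HasFDerivAt Y1
      (ContinuousLinearMap.pi
        ![(-2 * z 0) • prj 0, 0, prj 0, (2 * z 3) • prj 0 + (2 * z 0) • prj 3, 0]) z := by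
    apply hasFDerivAt_pi''
    intro i
    fin_cases i <;>
      simp only [Y1, Matrix.cons_val_zero, Matrix.cons_val_one, Matrix.head_cons,
        Matrix.cons_val_two, Matrix.tail_cons, Matrix.cons_val_three, Matrix.cons_val_four,
        proj_pi, Fin.isValue]
    · refine hasFDerivAt_congr'
        (((hasFDerivAt_apply 0 z).mul (hasFDerivAt_apply 0 z)).neg.congr_of_eventuallyEq
          (Filter.Eventually.of_forall (fun x => by simp; ring))) (fun w => by simp; ring)
    · exact hasFDerivAt_const _ _
    · exact hasFDerivAt_congr' (hasFDerivAt_apply 0 z) (fun w => by simp)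
    · exact hasFDerivAt_congr'
        ((((hasFDerivAt_apply 0 z).const_mul (2 : ℂ)).mul (hasFDerivAt_apply 3 z)).const_add 1)
        (fun w => by simp; ring)
    · exact hasFDerivAt_const _ _
  rw [h.fderiv]
  funext i
  fin_cases i <;> simp

open ContinuousLinearMap in
lemma fderiv_H2 (lam : ℂ) (z w : Fin 5 → ℂ) :
    fderiv ℂ (H2 lam) z w = ![0, -2 * w 1, 0, 0, 2 * w 4] := by
  have h : HasFDerivAt (H2 lam)
      (ContinuousLinearMap.pi ![0, (-2 : ℂ) • prj 1, 0, 0, (2 : ℂ) • prj 4]) z := by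
    apply hasFDerivAt_pi''
    intro i
    fin_cases i <;>
      simp only [H2, Matrix.cons_val_zero, Matrix.cons_val_one, Matrix.head_cons,
        Matrix.cons_val_two, Matrix.tail_cons, Matrix.cons_val_three, Matrix.cons_val_four,
        proj_pi, Fin.isValue]
    · exact hasFDerivAt_const _ _
    · exact (hasFDerivAt_apply 1 z).const_mul (-2 : ℂ)
    · exact hasFDerivAt_const _ _
    · exact hasFDerivAt_const _ _
    · exact (hasFDerivAt_apply 4 z).const_mul (2 : ℂ)
  rw [h.fderiv]
  funext i
  fin_cases i <;> simp

open ContinuousLinearMap in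
lemma fderiv_Y2 (lam : ℂ) (z w : Fin 5 → ℂ) :
    fderiv ℂ (Y2 lam) z w =
      ![0, -2 * z 1 * w 1, (1 / lam) * w 1, 0, 2 * z 4 * w 1 + 2 * z 1 * w 4] := by
  have h : HasFDerivAt (Y2 lam)
      (ContinuousLinearMap.pi
        ![0, (-2 * z 1) • prj 1, (1 / lam) • prj 1, 0,
          (2 * z 4) • prj 1 + (2 * z 1) • prj 4]) z := by
    apply hasFDerivAt_pi''
    intro i
    fin_cases i <;>
      simp only [Y2, Matrix.cons_val_zero, Matrix.cons_val_one, Matrix.head_cons,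
        Matrix.cons_val_two, Matrix.tail_cons, Matrix.cons_val_three, Matrix.cons_val_four,
        proj_pi, Fin.isValue]
    · exact hasFDerivAt_const _ _
    · refine hasFDerivAt_congr'
        (((hasFDerivAt_apply 1 z).mul (hasFDerivAt_apply 1 z)).neg.congr_of_eventuallyEq
          (Filter.Eventually.of_forall (fun x => by simp; ring))) (fun w => by simp; ring)
    · exact (hasFDerivAt_apply 1 z).const_mul (1 / lam)
    · exact hasFDerivAt_const _ _
    · exact hasFDerivAt_congr'
        ((((hasFDerivAt_apply 1 z).const_mul (2 : ℂ)).mul (hasFDerivAt_apply 4 z)).const_add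
          (1 / lam))
        (fun w => by simp; ring)
  rw [h.fderiv]
  funext i
  fin_cases i <;> simp

lemma mcons5 {α : Type*} (a b c d e f g : α) : ![a, b, c, d, e, f, g] 5 = f := rfl
lemma mcons6 {α : Type*} (a b c d e f g : α) : ![a, b, c, d, e, f, g] 6 = g := rfl

/-- **The symmetry algebra of the model D.7 is `sl₂(ℂ) × sl₂(ℂ) × ℂ`:** for `λ ≠ 0` the
seven vector fields `X₁, H₁, Y₁, X₂, H₂, Y₂, Z` are linearly independent and satisfy
`[X_i,H_i] = −2X_i`, `[H_i,Y_i] = −2Y_i`, `[X_i,Y_i] = H_i`, all brackets between the two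
triples vanish, and `Z` is central. -/
theorem D7_symmetry_algebra (lam : ℂ) (hlam : lam ≠ 0) :
    lieVF X1 H1 = (-2 : ℂ) • X1 ∧ lieVF H1 Y1 = (-2 : ℂ) • Y1 ∧ lieVF X1 Y1 = H1 ∧
    lieVF X2 (H2 lam) = (-2 : ℂ) • X2 ∧ lieVF (H2 lam) (Y2 lam) = (-2 : ℂ) • Y2 lam ∧
    lieVF X2 (Y2 lam) = H2 lam ∧
    lieVF X1 X2 = 0 ∧ lieVF X1 (H2 lam) = 0 ∧ lieVF X1 (Y2 lam) = 0 ∧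
    lieVF H1 X2 = 0 ∧ lieVF H1 (H2 lam) = 0 ∧ lieVF H1 (Y2 lam) = 0 ∧
    lieVF Y1 X2 = 0 ∧ lieVF Y1 (H2 lam) = 0 ∧ lieVF Y1 (Y2 lam) = 0 ∧
    lieVF Zc X1 = 0 ∧ lieVF Zc H1 = 0 ∧ lieVF Zc Y1 = 0 ∧
    lieVF Zc X2 = 0 ∧ lieVF Zc (H2 lam) = 0 ∧ lieVF Zc (Y2 lam) = 0 ∧
    LinearIndependent ℂ ![X1, H1, Y1, X2, H2 lam, Y2 lam, Zc] := by
  refine ⟨?_, ?_, ?_, ?_, ?_, ?_, ?_, ?_, ?_, ?_, ?_, ?_, ?_, ?_, ?_, ?_, ?_, ?_, ?_, ?_, ?_, ?_⟩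
  all_goals try {
    funext z
    simp only [lieVF, fderiv_X1, fderiv_X2, fderiv_Zc, fderiv_H1, fderiv_Y1, fderiv_H2,
      fderiv_Y2, X1, H1, Y1, X2, H2, Y2, Zc, Pi.smul_apply, Pi.zero_apply]
    funext i
    fin_cases i <;> simp <;> ring }
  -- linear independence
  rw [Fintype.linearIndependent_iff]
  intro g hg
  have e : ∀ (z : Fin 5 → ℂ) (j : Fin 5),
      g 0 * X1 z j + g 1 * H1 z j + g 2 * Y1 z j + g 3 * X2 z j + g 4 * H2 lam z j +
        g 5 * Y2 lam z j + g 6 * Zc z j = 0 := by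
    intro z j
    have h := congrFun (congrFun hg z) j
    have m0 : (![X1, H1, Y1, X2, H2 lam, Y2 lam, Zc]) 0 = X1 := rfl
    have m1 : (![X1, H1, Y1, X2, H2 lam, Y2 lam, Zc]) 1 = H1 := rfl
    have m2 : (![X1, H1, Y1, X2, H2 lam, Y2 lam, Zc]) 2 = Y1 := rfl
    have m3 : (![X1, H1, Y1, X2, H2 lam, Y2 lam, Zc]) 3 = X2 := rfl
    have m4 : (![X1, H1, Y1, X2, H2 lam, Y2 lam, Zc]) 4 = H2 lam := rfl
    have m5 : (![X1, H1, Y1, X2, H2 lam, Y2 lam, Zc]) 5 = Y2 lam := rfl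
    have m6 : (![X1, H1, Y1, X2, H2 lam, Y2 lam, Zc]) 6 = Zc := rfl
    simp only [Fin.sum_univ_seven, m0, m1, m2, m3, m4, m5, m6] at h
    simpa [mul_comm] using h
  have h0 := e (fun _ => 0) 0
  have h1 := e (fun _ => 0) 1
  have h3 := e (fun _ => 0) 3
  have h4 := e (fun _ => 0) 4
  have h2 := e (fun _ => 0) 2
  have ha := e ![1, 0, 0, 0, 0] 0
  have hb := e ![0, 1, 0, 0, 0] 1
  simp only [X1, H1, Y1, X2, H2, Y2, Zc, Matrix.cons_val_zero, Matrix.cons_val_one,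
    Matrix.head_cons, Matrix.cons_val_two, Matrix.tail_cons, Matrix.cons_val_three,
    Matrix.cons_val_four, mul_zero, mul_one, zero_add, add_zero, neg_zero, zero_pow,
    mul_neg] at h0 h1 h2 h3 h4 ha hb
  have hg0 : g 0 = 0 := by simpa using h0
  have hg3 : g 3 = 0 := by simpa using h1
  have hg2 : g 2 = 0 := by simpa using h3
  have hg5 : g 5 = 0 := by
    rcases mul_eq_zero.1 h4 with h | h
    · exact h
    · exact absurd h (one_div_ne_zero hlam)
  have hg1 : g 1 = 0 := by
    simp only [hg0, hg2] at ha
    linear_combination -ha / 2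
  have hg4 : g 4 = 0 := by
    simp only [hg3, hg5] at hb
    linear_combination -hb / 2
  have hg6 : g 6 = 0 := by
    simp [hg1, hg4, hg5] at h2
    exact h2
  intro i
  fin_cases i <;> assumption
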